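/- arXiv:1401.2387 — 2 statements merged into one kernel-verified Lean document; each statement's English description precedes it below -/
import Mathlib

section
/- Let q(z) = z₀² + z₁² + z₂² + z₃² on ℂ⁴. Let ℓ₁, …, ℓ₈ ⊆ ℂ⁴ be 2-dimensional complex subspaces with ℓᵢ ∩ ℓⱼ = {0} for all i ≠ j, on each of which q vanishes identically. Then there do not exist homogeneous polynomials f₀,…,f₃ ∈ ℝ[s,t] of degree 3, not all zero, such that the image of the associated map meets every one of the projectivized lines ℙ(ℓ₁), …, ℙ(ℓ₈) in ℙ³(ℂ). -/
open MvPolynomial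

private lemma aux_eval_smul {σ : Type*} [Fintype σ] {R : Type*} [CommSemiring R]
    {φ : MvPolynomial σ R} {n : ℕ} (hφ : φ.IsHomogeneous n) (c : R) (x : σ → R) :
    eval (fun i => c * x i) φ = c ^ n * eval x φ := by
  rw [eval_eq', eval_eq', Finset.mul_sum]
  refine Finset.sum_congr rfl fun d hd => ?_
  have hdeg : ∑ i, d i = n := by
    have h := hφ (mem_support_iff.mp hd)
    rw [← h]
    simp only [Finsupp.weight_apply, Finsupp.sum, Pi.one_apply, smul_eq_mul, mul_one]
    exact (Finset.sum_subset (Finset.subset_univ _)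
      (fun i _ hi => Finsupp.notMem_support_iff.mp hi)).symm
  calc coeff d φ * ∏ i, (c * x i) ^ d i
      = coeff d φ * ((∏ i, c ^ d i) * ∏ i, x i ^ d i) := by
        rw [← Finset.prod_mul_distrib]; simp [mul_pow]
    _ = c ^ n * (coeff d φ * ∏ i, x i ^ d i) := by
        rw [Finset.prod_pow_eq_pow_sum, hdeg]; ring

private lemma aux_eval_aeval (G : MvPolynomial (Fin 2) ℂ) (w : Fin 2 → Polynomial ℂ) (r : ℂ) :
    Polynomial.eval r (aeval w G) = eval (fun i => Polynomial.eval r (w i)) G := by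
  have h := MvPolynomial.eval₂_comp_left (Polynomial.evalRingHom r)
    (algebraMap ℂ (Polynomial ℂ)) w G
  rw [aeval_def]
  rw [show Polynomial.eval r (eval₂ (algebraMap ℂ (Polynomial ℂ)) w G)
      = Polynomial.evalRingHom r (eval₂ (algebraMap ℂ (Polynomial ℂ)) w G) from rfl, h]
  have h2 : (Polynomial.evalRingHom r).comp (algebraMap ℂ (Polynomial ℂ)) = RingHom.id ℂ := by
    ext z; simp
  rw [h2]
  rfl

/-- Eight pairwise disjoint isotropic lines on the empty quadric in `ℙ³(ℂ)`
cannot all be met by a rational cubic curve parametrized by real forms. -/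
theorem no_real_cubic_meets_eight_lines
    (ℓ : Fin 8 → Submodule ℂ (Fin 4 → ℂ))
    (hdim : ∀ j, Module.finrank ℂ (ℓ j) = 2)
    (hdisj : ∀ i j, i ≠ j → ℓ i ⊓ ℓ j = ⊥)
    (hiso : ∀ j, ∀ v ∈ ℓ j, ∑ k, (v k) ^ 2 = 0) :
    ¬ ∃ f : Fin 4 → MvPolynomial (Fin 2) ℝ,
      (∀ i, (f i).IsHomogeneous 3) ∧ (∃ i, f i ≠ 0) ∧
      ∀ j : Fin 8, ∃ a b : ℂ,
        (fun i => eval ![a, b] (map (algebraMap ℝ ℂ) (f i))) ≠ 0 ∧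
        (fun i => eval ![a, b] (map (algebraMap ℝ ℂ) (f i))) ∈ ℓ j := by
  classical
  rintro ⟨f, hhom, ⟨i₀, hi₀⟩, hmeet⟩
  choose a b hv0 hvmem using hmeet
  set F : Fin 4 → MvPolynomial (Fin 2) ℂ := fun i => map (algebraMap ℝ ℂ) (f i) with hF
  have hFhom : ∀ i, (F i).IsHomogeneous 3 := fun i => (hhom i).map _
  set v : Fin 8 → Fin 4 → ℂ := fun j i => eval ![a j, b j] (F i) with hv
  have hv0' : ∀ j, v j ≠ 0 := hv0
  have hvmem' : ∀ j, v j ∈ ℓ j := hvmem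
  -- the parameter points are nonzero
  have hab : ∀ j, ¬ (a j = 0 ∧ b j = 0) := by
    rintro j ⟨ha, hb⟩
    apply hv0' j
    funext i
    have he : ![a j, b j] = fun k => (0 : ℂ) * ![a j, b j] k := by
      funext k; fin_cases k <;> simp [ha, hb]
    show eval ![a j, b j] (F i) = 0
    rw [he, aux_eval_smul (hFhom i) 0]
    simp
  -- proportional parameters give equal indices
  have key : ∀ i j, a i * b j = a j * b i → i = j := by
    intro i j hprop
    by_contra hij
    -- find a scalar c with (a i, b i) = c • (a j, b j)
    obtain ⟨c, hca, hcb⟩ : ∃ c : ℂ, a i = c * a j ∧ b i = c * b j := by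
      by_cases hbj : b j = 0
      · have haj : a j ≠ 0 := fun h => hab j ⟨h, hbj⟩
        have hbi : b i = 0 := by
          have : a j * b i = 0 := by rw [← hprop, hbj, mul_zero]
          exact (mul_eq_zero.mp this).resolve_left haj
        exact ⟨a i / a j, by field_simp, by rw [hbi, hbj, mul_zero]⟩
      · refine ⟨b i / b j, ?_, by field_simp⟩
        field_simp
        linear_combination hprop
    have he : ![a i, b i] = fun k => c * ![a j, b j] k := by
      funext k; fin_cases k <;> simp [hca, hcb]
    have hvi : v i = (c ^ 3) • v j := by
      funext i'
      show eval ![a i, b i] (F i') = (c ^ 3) • v j i'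
      rw [he, aux_eval_smul (hFhom i') c]
      rfl
    have hc : c ≠ 0 := by
      rintro rfl
      apply hv0' i
      rw [hvi]
      simp
    have hmem : v i ∈ ℓ i ⊓ ℓ j := by
      refine ⟨hvmem' i, ?_⟩
      rw [hvi]
      exact Submodule.smul_mem _ _ (hvmem' j)
    rw [hdisj i j hij] at hmem
    exact hv0' i ((Submodule.mem_bot ℂ).mp hmem)
  -- the sum-of-squares form
  set g : MvPolynomial (Fin 2) ℂ := ∑ i, (F i) ^ 2 with hg
  have hghom : g.IsHomogeneous 6 := by
    refine IsHomogeneous.sum _ _ _ fun i _ => ?_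
    simpa using (hFhom i).pow 2
  have hgeval : ∀ j, eval ![a j, b j] g = 0 := by
    intro j
    have h := hiso j (v j) (hvmem' j)
    rw [hg]
    simpa [hv] using h
  -- dehomogenize
  set p : Polynomial ℂ := aeval ![Polynomial.X, (1 : Polynomial ℂ)] g with hp
  have hpdeg : p.natDegree ≤ 6 := by
    rw [hp, aeval_def, eval₂_eq]
    refine Polynomial.natDegree_sum_le_of_forall_le _ _ fun d hd => ?_
    refine (Polynomial.natDegree_mul_le).trans ?_
    have h1 : (algebraMap ℂ (Polynomial ℂ) (coeff d g)).natDegree = 0 :=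
      Polynomial.natDegree_C _
    rw [h1, zero_add]
    refine (Polynomial.natDegree_prod_le _ _).trans ?_
    have hd6 : d.degree = 6 := by
      have h := hghom (mem_support_iff.mp hd)
      rw [Finsupp.degree_eq_weight_one]; exact h
    calc ∑ i ∈ d.support, (![Polynomial.X, (1 : Polynomial ℂ)] i ^ d i).natDegree
        ≤ ∑ i ∈ d.support, d i := by
          refine Finset.sum_le_sum fun i _ => ?_
          fin_cases i <;>
            simp [Polynomial.natDegree_X_pow, Polynomial.natDegree_one]
      _ = 6 := hd6
  -- roots of `p`
  have hproot : ∀ j, b j ≠ 0 → p.eval (a j / b j) = 0 := by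
    intro j hbj
    have hw : (fun i => Polynomial.eval (a j / b j) (![Polynomial.X, (1 : Polynomial ℂ)] i))
        = ![a j / b j, 1] := by
      funext k; fin_cases k <;> simp
    have hev : p.eval (a j / b j) = eval ![a j / b j, 1] g := by
      rw [hp, aux_eval_aeval, hw]
    have he : ![a j, b j] = fun k => b j * ![a j / b j, 1] k := by
      funext k; fin_cases k <;> simp <;> field_simp
    have h := aux_eval_smul hghom (b j) ![a j / b j, 1]
    rw [← he, hgeval j] at h
    rw [hev]
    exact (mul_eq_zero.mp h.symm).resolve_left (pow_ne_zero _ hbj)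
  -- `p` has at least seven distinct roots, hence vanishes
  have hp0 : p = 0 := by
    set S : Finset (Fin 8) := Finset.univ.filter (fun j => b j ≠ 0) with hS
    have hScard : 7 ≤ S.card := by
      have hcompl : (Finset.univ.filter (fun j => ¬ b j ≠ 0)).card ≤ 1 := by
        refine Finset.card_le_one.mpr fun i hi j hj => ?_
        simp only [Finset.mem_filter, not_not] at hi hj
        exact key i j (by rw [hi.2, hj.2, mul_zero, mul_zero])
      have h8 : S.card + (Finset.univ.filter (fun j => ¬ b j ≠ 0)).card = 8 := by
        rw [hS]
        rw [Finset.card_filter_add_card_filter_not]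
        simp
      omega
    refine Polynomial.eq_zero_of_natDegree_lt_card_of_eval_eq_zero p
      (f := fun j : S => a j.1 / b j.1) ?_ ?_ ?_
    · intro i j hij
      have hbi : b i.1 ≠ 0 := (Finset.mem_filter.mp i.2).2
      have hbj : b j.1 ≠ 0 := (Finset.mem_filter.mp j.2).2
      have : a i.1 * b j.1 = a j.1 * b i.1 := by
        field_simp at hij
        linear_combination hij
      exact Subtype.ext (key i.1 j.1 this)
    · exact fun j => hproot j.1 (Finset.mem_filter.mp j.2).2
    · rw [Fintype.card_coe]
      omega
  -- hence `g` vanishes on the affine chart and everywhere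
  have hg1 : ∀ r : ℂ, eval ![r, 1] g = 0 := by
    intro r
    have := aux_eval_aeval g ![Polynomial.X, (1 : Polynomial ℂ)] r
    rw [← hp, hp0] at this
    simp only [Polynomial.eval_zero] at this
    have hw : (fun i => Polynomial.eval r (![Polynomial.X, (1 : Polynomial ℂ)] i))
        = ![r, 1] := by
      funext k; fin_cases k <;> simp
    rw [hw] at this
    exact this.symm
  have hslice : ∀ x0 x1 : ℂ, x1 ≠ 0 → eval ![x0, x1] g = 0 := by
    intro x0 x1 h1
    have he : ![x0, x1] = fun k => x1 * ![x0 / x1, 1] k := by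
      funext k; fin_cases k <;> simp <;> field_simp
    rw [he, aux_eval_smul hghom x1, hg1, mul_zero]
  have hgall : ∀ x : Fin 2 → ℂ, eval x g = 0 := by
    intro x
    have hx : x = ![x 0, x 1] := by funext k; fin_cases k <;> simp
    rw [hx]
    by_cases h1 : x 1 = 0
    · set P : Polynomial ℂ := aeval ![Polynomial.C (x 0), Polynomial.X] g with hP
      have hPeval : ∀ t : ℂ, P.eval t = eval ![x 0, t] g := by
        intro t
        have hw : (fun k => Polynomial.eval t (![Polynomial.C (x 0), Polynomial.X] k))
            = ![x 0, t] := by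
          funext k; fin_cases k <;> simp
        rw [hP, aux_eval_aeval, hw]
      have hP0 : P = 0 := by
        refine Polynomial.eq_zero_of_infinite_isRoot P ?_
        refine Set.Infinite.mono (s := {(0 : ℂ)}ᶜ) ?_ ?_
        · intro t ht
          simp only [Set.mem_compl_iff, Set.mem_singleton_iff] at ht
          show P.eval t = 0
          rw [hPeval t]
          exact hslice _ _ ht
        · exact Set.Finite.infinite_compl (Set.finite_singleton 0)
      have := hPeval 0
      rw [hP0] at this
      simp only [Polynomial.eval_zero] at this
      rw [h1, ← this]
    · exact hslice _ _ h1
  have hg0 : g = 0 := MvPolynomial.funext fun x => by rw [hgall x, map_zero]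
  -- pull back to the reals
  have hsum0 : (∑ i, (f i) ^ 2 : MvPolynomial (Fin 2) ℝ) = 0 := by
    apply MvPolynomial.map_injective (algebraMap ℝ ℂ) (algebraMap ℝ ℂ).injective
    rw [map_sum, map_zero]
    simpa [hF] using hg0
  -- contradiction: sum of squares of real polynomials
  obtain ⟨x, hx⟩ : ∃ x : Fin 2 → ℝ, eval x (f i₀) ≠ 0 := by
    by_contra h
    push_neg at h
    exact hi₀ (MvPolynomial.funext fun x => by simpa using h x)
  have h0 : ∑ i, (eval x (f i)) ^ 2 = 0 := by
    have := congrArg (eval x) hsum0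
    simpa using this
  have := (Finset.sum_eq_zero_iff_of_nonneg fun i _ => sq_nonneg (eval x (f i))).mp h0
    i₀ (Finset.mem_univ _)
  exact hx (pow_eq_zero_iff (n := 2) (by norm_num) |>.mp this)
end

section
/- Let p₁, …, p₈ be eight distinct points of the empty conic C_E = {[x:y:z] ∈ ℙ²(ℂ) : x² + y² + z² = 0}. Then there do not exist homogeneous polynomials f₀, f₁, f₂ ∈ ℝ[s,t] of degree 3, not all zero, such that every pₖ lies in the image of the associated map [s:t] ↦ [f₀(s,t) : f₁(s,t) : f₂(s,t)]. -/
open MvPolynomial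

private lemma aux_sum_eq {n : ℕ} {d : Fin 2 →₀ ℕ} {φ : MvPolynomial (Fin 2) ℂ}
    (hφ : φ.IsHomogeneous n) (hd : d ∈ φ.support) : d 0 + d 1 = n := by
  have h := hφ (MvPolynomial.mem_support_iff.mp hd)
  rw [Pi.one_def, ← Finsupp.degree_eq_weight_one] at h
  rw [← h, Finsupp.degree_apply]
  rw [Finset.sum_subset (Finset.subset_univ d.support)]
  · exact (Fin.sum_univ_two d).symm
  · intro x _ hx
    simpa using hx

private lemma aux_eval_smul_s13 {n : ℕ} {φ : MvPolynomial (Fin 2) ℂ} (hφ : φ.IsHomogeneous n)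
    (c : ℂ) (x : Fin 2 → ℂ) :
    MvPolynomial.eval (c • x) φ = c ^ n * MvPolynomial.eval x φ := by
  rw [MvPolynomial.eval_eq', MvPolynomial.eval_eq', Finset.mul_sum]
  refine Finset.sum_congr rfl fun d hd => ?_
  have hdn := aux_sum_eq hφ hd
  simp only [Fin.prod_univ_two, Pi.smul_apply, smul_eq_mul, mul_pow]
  rw [← hdn, pow_add]
  ring

private lemma aux_eval_aeval_s13 (x : ℂ) (v : Fin 2 → Polynomial ℂ) (g : MvPolynomial (Fin 2) ℂ) :
    Polynomial.eval x (MvPolynomial.aeval v g) =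
      MvPolynomial.eval (fun i => Polynomial.eval x (v i)) g := by
  induction g using MvPolynomial.induction_on with
  | C a => simp
  | add p q hp hq => simp [hp, hq]
  | mul_X p i hp => simp [hp]

private lemma aux_natDegree_le {g : MvPolynomial (Fin 2) ℂ} (hg : g.IsHomogeneous 6) :
    (MvPolynomial.aeval ![Polynomial.X, 1] g : Polynomial ℂ).natDegree ≤ 6 := by
  conv_lhs => rw [g.as_sum, map_sum]
  apply Polynomial.natDegree_sum_le_of_forall_le
  intro d hd
  rw [MvPolynomial.aeval_monomial]
  refine (Polynomial.natDegree_C_mul_le _ _).trans ?_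
  have : (d.prod fun i k => ![Polynomial.X, (1 : Polynomial ℂ)] i ^ k) =
      Polynomial.X ^ d 0 := by
    rw [Finsupp.prod_fintype]
    · simp [Fin.prod_univ_two]
    · intro i; simp
  rw [this, Polynomial.natDegree_X_pow]
  have := aux_sum_eq hg hd
  omega

/-- No rational cubic curve in `ℙ²` parametrized by real binary cubic forms
passes through eight distinct points of the empty conic `{x² + y² + z² = 0}`. -/
theorem no_real_cubic_through_eight_points_of_empty_conic
    (p : Fin 8 → Projectivization ℂ (Fin 3 → ℂ))
    (hpdist : Function.Injective p)
    (hpC : ∀ k, ∑ i, ((p k).rep i) ^ 2 = 0) :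
    ¬ ∃ f : Fin 3 → MvPolynomial (Fin 2) ℝ,
      (∀ i, (f i).IsHomogeneous 3) ∧ (∃ i, f i ≠ 0) ∧
      ∀ k, ∃ (a b : ℂ) (h : (fun i => eval ![a, b] (map (algebraMap ℝ ℂ) (f i))) ≠ 0),
        p k = Projectivization.mk ℂ _ h := by
  rintro ⟨f, hhom, ⟨i₀, hi₀⟩, hall⟩
  choose a b hne hmk using hall
  set F : Fin 3 → MvPolynomial (Fin 2) ℂ := fun i => map (algebraMap ℝ ℂ) (f i) with hF
  have hFhom : ∀ i, (F i).IsHomogeneous 3 := fun i => (hhom i).map _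
  set g : MvPolynomial (Fin 2) ℝ := ∑ i, (f i) ^ 2 with hg
  have hghom : g.IsHomogeneous 6 :=
    MvPolynomial.IsHomogeneous.sum _ _ _ (fun i _ => (hhom i).pow 2)
  set G : MvPolynomial (Fin 2) ℂ := MvPolynomial.map (algebraMap ℝ ℂ) g with hGdef
  have hGhom : G.IsHomogeneous 6 := hghom.map _
  have hGeval : ∀ x : Fin 2 → ℂ,
      MvPolynomial.eval x G = ∑ i, (MvPolynomial.eval x (F i)) ^ 2 := by
    intro x
    simp only [hGdef, hg, map_sum, map_pow]
    rfl
  -- the parameter values are nontrivial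
  have habne : ∀ k, ¬ (a k = 0 ∧ b k = 0) := by
    rintro k ⟨ha, hb⟩
    apply hne k
    funext i
    have h0 : (![a k, b k] : Fin 2 → ℂ) = (0 : ℂ) • ![a k, b k] := by
      funext j; fin_cases j <;> simp [ha, hb]
    rw [h0, aux_eval_smul_s13 (hFhom i)]
    simp
  -- proportional parameters give equal points
  have hprop : ∀ j k (c : ℂ), c ≠ 0 → a j = c * a k → b j = c * b k → j = k := by
    intro j k c hc haj hbj
    apply hpdist
    rw [hmk j, hmk k]
    rw [Projectivization.mk_eq_mk_iff]
    refine ⟨Units.mk0 (c ^ 3) (pow_ne_zero _ hc), ?_⟩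
    funext i
    have hsm : (![a j, b j] : Fin 2 → ℂ) = c • ![a k, b k] := by
      funext m; fin_cases m <;> simp [haj, hbj]
    simp only [Pi.smul_apply, Units.smul_def, Units.val_mk0, smul_eq_mul]
    rw [hsm, aux_eval_smul_s13 (hFhom i)]
  -- G vanishes at the parameter values
  have hvanish : ∀ k, MvPolynomial.eval ![a k, b k] G = 0 := by
    intro k
    obtain ⟨c, hc⟩ := (Projectivization.mk_eq_mk_iff ℂ _ _
      (Projectivization.rep_nonzero _) (hne k)).mp (by rw [← hmk k, Projectivization.mk_rep])
    have hrep : ∀ i, (p k).rep i = (c : ℂ) * MvPolynomial.eval ![a k, b k] (F i) := by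
      intro i
      rw [← hc]
      simp [Units.smul_def, hF, MvPolynomial.eval_map]
    have := hpC k
    simp only [hrep] at this
    have hsum : (c : ℂ) ^ 2 * ∑ i, (MvPolynomial.eval ![a k, b k] (F i)) ^ 2 = 0 := by
      rw [Finset.mul_sum, ← this]
      refine Finset.sum_congr rfl fun i _ => by ring
    rw [hGeval]
    rcases mul_eq_zero.mp hsum with h | h
    · exact absurd (pow_eq_zero_iff (by norm_num) |>.mp h) c.ne_zero
    · exact h
  -- at most one k has b k = 0
  have hTone : ∀ j k, b j = 0 → b k = 0 → j = k := by
    intro j k hbj hbk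
    have hak : a k ≠ 0 := fun h => habne k ⟨h, hbk⟩
    refine hprop j k (a j / a k) ?_ ?_ ?_
    · exact div_ne_zero (fun h => habne j ⟨h, hbj⟩) hak
    · field_simp
    · rw [hbj, hbk, mul_zero]
  -- the univariate polynomial
  set P : Polynomial ℂ := MvPolynomial.aeval ![Polynomial.X, 1] G with hP
  have hPeval : ∀ x : ℂ, P.eval x = MvPolynomial.eval ![x, 1] G := by
    intro x
    rw [hP, aux_eval_aeval_s13]
    have hfun : (fun i => Polynomial.eval x (![Polynomial.X, (1 : Polynomial ℂ)] i)) = ![x, 1] := by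
      funext i; fin_cases i <;> simp
    rw [hfun]
  have hroot : ∀ k, b k ≠ 0 → P.eval (a k / b k) = 0 := by
    intro k hbk
    have hsm : (![a k, b k] : Fin 2 → ℂ) = b k • ![a k / b k, 1] := by
      funext m; fin_cases m <;> simp [smul_eq_mul]
      field_simp
    have := hvanish k
    rw [hsm, aux_eval_smul_s13 hGhom] at this
    rw [hPeval]
    rcases mul_eq_zero.mp this with h | h
    · exact absurd (pow_eq_zero_iff (by norm_num) |>.mp h) hbk
    · exact h
  -- P = 0 by counting roots
  have hPzero : P = 0 := by
    apply Polynomial.eq_zero_of_natDegree_lt_card_of_eval_eq_zero P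
      (f := fun k : {k : Fin 8 // b k ≠ 0} => a k.1 / b k.1)
    · intro j k hjk
      have hbj := j.2
      have hbk := k.2
      have : a j.1 = (b j.1 / b k.1) * a k.1 := by
        field_simp
        field_simp at hjk
        linear_combination hjk
      apply Subtype.ext
      refine hprop j.1 k.1 (b j.1 / b k.1) (div_ne_zero hbj hbk) this ?_
      field_simp
    · intro k
      exact hroot k.1 k.2
    · refine lt_of_le_of_lt (aux_natDegree_le hGhom) ?_
      have hcard : Fintype.card {k : Fin 8 // b k ≠ 0} =
          (Finset.univ.filter fun k => b k ≠ 0).card := Fintype.card_subtype _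
      have h1 : (Finset.univ.filter fun k : Fin 8 => ¬ b k ≠ 0).card ≤ 1 := by
        rw [Finset.card_le_one]
        intro j hj k hk
        simp only [Finset.mem_filter, not_not] at hj hk
        exact hTone j k hj.2 hk.2
      have h2 := Finset.card_filter_add_card_filter_not
        (s := (Finset.univ : Finset (Fin 8))) (p := fun k => b k ≠ 0)
      simp only [Finset.card_univ, Fintype.card_fin] at h2
      omega
  -- hence G vanishes on all ![x, 1]
  have hGline : ∀ x : ℂ, MvPolynomial.eval ![x, 1] G = 0 := by
    intro x
    rw [← hPeval, hPzero, Polynomial.eval_zero]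
  -- G vanishes at ![1, 0] too
  have hG10 : MvPolynomial.eval ![1, 0] G = 0 := by
    set H : Polynomial ℂ := MvPolynomial.aeval ![1, Polynomial.X] G with hH
    have hHeval : ∀ y : ℂ, H.eval y = MvPolynomial.eval ![1, y] G := by
      intro y
      rw [hH, aux_eval_aeval_s13]
      have hfun : (fun i => Polynomial.eval y (![1, Polynomial.X] i)) = ![(1 : ℂ), y] := by
        funext i; fin_cases i <;> simp
      rw [hfun]
    have hHzero : H = 0 := by
      apply Polynomial.eq_zero_of_infinite_isRoot
      apply Set.Infinite.mono (s := {(0 : ℂ)}ᶜ)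
      · intro y hy
        have hy' : (y : ℂ) ≠ 0 := hy
        have hsm : (![1, y] : Fin 2 → ℂ) = y • ![1 / y, 1] := by
          funext m; fin_cases m <;> simp [smul_eq_mul]
          field_simp
        have h1y := hGline (1 / y)
        simp only [Polynomial.IsRoot, Set.mem_setOf_eq]
        rw [hHeval, hsm, aux_eval_smul_s13 hGhom, h1y, mul_zero]
      · exact Set.Finite.infinite_compl (Set.finite_singleton 0)
    rw [← hHeval, hHzero, Polynomial.eval_zero]
  -- G vanishes everywhere
  have hGall : ∀ x y : ℂ, MvPolynomial.eval ![x, y] G = 0 := by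
    intro x y
    by_cases hy : y = 0
    · subst hy
      have hsm : (![x, 0] : Fin 2 → ℂ) = x • ![1, 0] := by
        funext m; fin_cases m <;> simp
      rw [hsm, aux_eval_smul_s13 hGhom, hG10, mul_zero]
    · have hsm : (![x, y] : Fin 2 → ℂ) = y • ![x / y, 1] := by
        funext m; fin_cases m <;> simp [smul_eq_mul]
        field_simp
      rw [hsm, aux_eval_smul_s13 hGhom, hGline, mul_zero]
  -- g vanishes at all real points
  have hgreal : ∀ v : Fin 2 → ℝ, MvPolynomial.eval v g = 0 := by
    intro v
    have hmap : algebraMap ℝ ℂ (MvPolynomial.eval v g) =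
        MvPolynomial.eval (fun i => (v i : ℂ)) G := by
      rw [hGdef, MvPolynomial.eval_map, ← MvPolynomial.eval₂_id (g := v) g,
        MvPolynomial.eval₂_comp_left (algebraMap ℝ ℂ)]
      simp only [RingHom.comp_id]
      rfl
    have hv : (fun i => ((v i : ℂ))) = ![(v 0 : ℂ), (v 1 : ℂ)] := by
      funext i; fin_cases i <;> simp
    rw [hv, hGall] at hmap
    exact (algebraMap ℝ ℂ).injective (by rw [hmap, map_zero])
  -- each f i is zero
  have hfi : ∀ i, f i = 0 := by
    intro i
    apply MvPolynomial.funext (p := f i) (q := 0)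
    intro v
    have h := hgreal v
    rw [hg, map_sum] at h
    have hterm : ∀ j ∈ Finset.univ, (0 : ℝ) ≤ MvPolynomial.eval v ((f j) ^ 2) := by
      intro j _
      rw [map_pow]
      positivity
    have h2 := (Finset.sum_eq_zero_iff_of_nonneg hterm).mp h i (Finset.mem_univ i)
    rw [map_pow] at h2
    rw [map_zero]
    exact pow_eq_zero_iff (by norm_num) |>.mp h2
  exact hi₀ (hfi i₀)
end
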